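/- Let A be a self-adjoint operator on a complex Hilbert space Z with compact resolvent, b ∈ Z nonzero, and suppose the eigenvalue branch k ↦ (f(k), x(k)) of A - k b⟨·,b⟩ is differentiable with ‖x(k)‖ = 1 for all k. Then f'(k) = -|⟨x(k), b⟩|², so f is nonincreasing in k; in particular each branch of the root locus of a collocated self-adjoint system moves to the left. -/

import Mathlib

open scoped InnerProductSpace

/-- For a collocated self-adjoint system, along a differentiable eigenvalue
branch `k ↦ (f k, x k)` of `A - k B B*` with unit eigenvectors, `f'(k) = -|⟨x(k), b⟩|²`;
in particular `f` is nonincreasing: each branch of the root locus moves to the left. -/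
theorem stmt5 {Z : Type*} [NormedAddCommGroup Z] [InnerProductSpace ℂ Z]
    (A : Z →ₗ[ℂ] Z) (hA : ∀ x y : Z, ⟪A x, y⟫_ℂ = ⟪x, A y⟫_ℂ)
    (b : Z) (hb : b ≠ 0)
    (f : ℝ → ℝ) (x : ℝ → Z)
    (hf : Differentiable ℝ f) (hx : Differentiable ℝ x)
    (hnorm : ∀ k : ℝ, ‖x k‖ = 1)
    (heig : ∀ k : ℝ, A (x k) - (k : ℂ) • ⟪b, x k⟫_ℂ • b = (f k : ℂ) • x k) :
    (∀ k : ℝ, deriv f k = -‖⟪b, x k⟫_ℂ‖ ^ 2) ∧ Antitone f := by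
  have hAx : ∀ t : ℝ, A (x t) = (f t : ℂ) • x t + (t : ℂ) • ⟪b, x t⟫_ℂ • b := by
    intro t
    have := heig t
    linear_combination (norm := module) this
  have key : ∀ k : ℝ, deriv f k = -‖⟪b, x k⟫_ℂ‖ ^ 2 := by
    intro k
    set v : Z := deriv x k with hv
    set w : ℂ := ⟪b, x k⟫_ℂ with hw
    set w' : ℂ := ⟪b, v⟫_ℂ with hw'
    set f' : ℝ := deriv f k with hf'
    have hxk : HasDerivAt x v k := (hx k).hasDerivAt
    have hfk : HasDerivAt f f' k := (hf k).hasDerivAt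
    -- derivative of y = fun t => A (x t)
    have hfc : HasDerivAt (fun t : ℝ => (f t : ℂ)) (f' : ℂ) k := by
      exact hfk.ofReal_comp
    have htC : HasDerivAt (fun t : ℝ => (t : ℂ)) 1 k := by
      simpa using (hasDerivAt_id k).ofReal_comp
    have hwD : HasDerivAt (fun t : ℝ => ⟪b, x t⟫_ℂ) w' k := by
      simpa using (hasDerivAt_const k b).inner ℂ hxk
    set y : ℝ → Z := fun t => (f t : ℂ) • x t + (t : ℂ) • ⟪b, x t⟫_ℂ • b with hy
    set y'v : Z := ((f' : ℂ) • x k + (f k : ℂ) • v) +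
        ((k : ℂ) • (w' • b) + (1 : ℂ) • (w • b)) with hy'v
    have hyD : HasDerivAt y y'v k := by
      have h := (hfc.smul hxk).add (htC.smul (hwD.smul_const b))
      convert h using 1
      · rfl
      rw [hy'v, ← hw]
      module
    have hyA : ∀ t, y t = A (x t) := fun t => (hAx t).symm
    -- symmetry: fun s => ⟪x s, y k⟫ = conj ∘ (fun s => ⟪x k, y s⟫)
    have hsym : ∀ s : ℝ, ⟪x s, y k⟫_ℂ = (starRingEnd ℂ) ⟪x k, y s⟫_ℂ := by
      intro s
      rw [hyA, hyA, ← inner_conj_symm, hA]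
    have hp : HasDerivAt (fun s => ⟪x s, y k⟫_ℂ) ⟪v, y k⟫_ℂ k := by
      simpa using hxk.inner ℂ (hasDerivAt_const k (y k))
    have hq : HasDerivAt (fun s => ⟪x k, y s⟫_ℂ) ⟪x k, y'v⟫_ℂ k := by
      simpa using (hasDerivAt_const k (x k)).inner ℂ hyD
    have hq2 : HasDerivAt (fun s => ⟪y s, x k⟫_ℂ) ⟪y'v, x k⟫_ℂ k := by
      simpa [Function.comp_def] using
        (Complex.conjCLE.toContinuousLinearMap.hasFDerivAt.comp_hasDerivAt k hq)
    have hsym2 : ∀ s : ℝ, ⟪x s, y k⟫_ℂ = ⟪y s, x k⟫_ℂ := by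
      intro s; rw [hsym s, inner_conj_symm]
    have heq : ⟪v, y k⟫_ℂ = ⟪y'v, x k⟫_ℂ := by
      refine hp.unique ?_
      simpa only [hsym2] using hq2
    have hxx : ⟪x k, x k⟫_ℂ = 1 := by
      rw [inner_self_eq_norm_sq_to_K, hnorm k]; norm_num
    -- expand
    rw [hy, hy'v] at heq
    simp only [inner_add_left, inner_add_right, inner_smul_left, inner_smul_right, hxx,
      map_add, map_mul, RingHom.map_one, Complex.conj_conj, Complex.conj_ofReal,
      inner_conj_symm] at heq
    rw [← hw, show ⟪v, b⟫_ℂ = (starRingEnd ℂ) w' from by rw [hw', inner_conj_symm]] at heq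
    have hfin : (f' : ℂ) = -((starRingEnd ℂ) w * w) := by
      linear_combination -heq
    have hms : (starRingEnd ℂ) w * w = ((‖w‖ ^ 2 : ℝ) : ℂ) := by
      rw [mul_comm, Complex.mul_conj]
      norm_cast
      rw [Complex.normSq_eq_norm_sq]
    have hfin2 : (f' : ℂ) = ((-‖w‖ ^ 2 : ℝ) : ℂ) := by rw [hfin, hms]; push_cast; ring
    exact_mod_cast hfin2
  refine ⟨key, antitone_of_deriv_nonpos hf fun t => ?_⟩
  rw [key t]
  exact neg_nonpos.mpr (by positivity)
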